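/- Let f : ℝ² → ℝ be n times continuously differentiable on a square box B with midpoint m and radius r, and let 1 ≤ m₀ ≤ n. Define the Taylor form □f(B) = T_{m₀−1}(B) + r^{m₀}·[−S, S] where S = ∑_{k=m₀}^{n} s_k r^{k−m₀}, s_k = (1/k!)∑_{j=0}^{k} C(k,j)|f^{(k−j,j)}(m)| for k < n, and s_n = (1/n!)∑_{j=0}^{n} C(n,j)·M_j with M_j ≥ sup_{x∈B}|f^{(n−j,j)}(x)|. Then f(B) ⊆ □f(B), i.e., the Taylor form is a valid range enclosure. -/

import Mathlib

open Set Pointwise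

/-- Partial derivative with respect to the first variable. -/
noncomputable def pdx (f : ℝ × ℝ → ℝ) : ℝ × ℝ → ℝ :=
  fun p => deriv (fun x => f (x, p.2)) p.1

/-- Partial derivative with respect to the second variable. -/
noncomputable def pdy (f : ℝ × ℝ → ℝ) : ℝ × ℝ → ℝ :=
  fun p => deriv (fun y => f (p.1, y)) p.2

/-- The mixed partial derivative `∂^{i+j} f / ∂x^i ∂y^j`. -/
noncomputable def partialDeriv2 (f : ℝ × ℝ → ℝ) (i j : ℕ) : ℝ × ℝ → ℝ :=
  pdx^[i] (pdy^[j] f)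

section Helpers

lemma pdx_eq_fderiv {g : ℝ × ℝ → ℝ} {p : ℝ × ℝ} (hg : DifferentiableAt ℝ g p) :
    pdx g p = fderiv ℝ g p (1, 0) := by
  have hc : HasDerivAt (fun x : ℝ => (x, p.2)) ((1 : ℝ), (0 : ℝ)) p.1 :=
    (hasDerivAt_id p.1).prodMk (hasDerivAt_const _ _)
  have := hg.hasFDerivAt.comp_hasDerivAt p.1 (by simpa using hc)
  exact this.deriv

lemma pdy_eq_fderiv {g : ℝ × ℝ → ℝ} {p : ℝ × ℝ} (hg : DifferentiableAt ℝ g p) :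
    pdy g p = fderiv ℝ g p (0, 1) := by
  have hc : HasDerivAt (fun y : ℝ => (p.1, y)) ((0 : ℝ), (1 : ℝ)) p.2 :=
    (hasDerivAt_const _ _).prodMk (hasDerivAt_id p.2)
  have := hg.hasFDerivAt.comp_hasDerivAt p.2 (by simpa using hc)
  exact this.deriv

lemma hasDerivAt_line {h : ℝ × ℝ → ℝ} {mx my v1 v2 t : ℝ}
    (hh : DifferentiableAt ℝ h (mx + t * v1, my + t * v2)) :
    HasDerivAt (fun t : ℝ => h (mx + t * v1, my + t * v2))
      (v1 * pdx h (mx + t * v1, my + t * v2) + v2 * pdy h (mx + t * v1, my + t * v2)) t := by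
  set p : ℝ × ℝ := (mx + t * v1, my + t * v2)
  have hc : HasDerivAt (fun t : ℝ => ((mx + t * v1 : ℝ), (my + t * v2 : ℝ))) (v1, v2) t :=
    ((hasDerivAt_mul_const v1).const_add mx).prodMk ((hasDerivAt_mul_const v2).const_add my)
  have H := hh.hasFDerivAt.comp_hasDerivAt t hc
  have : fderiv ℝ h p (v1, v2) = v1 * pdx h p + v2 * pdy h p := by
    have : (v1, v2) = v1 • ((1:ℝ), (0:ℝ)) + v2 • ((0:ℝ), (1:ℝ)) := by
      simp [Prod.ext_iff]
    rw [this, map_add, map_smul, map_smul, pdx_eq_fderiv hh, pdy_eq_fderiv hh]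
    simp [smul_eq_mul]
  rwa [this] at H

lemma diffAt_of_contDiffOn {g : ℝ × ℝ → ℝ} {U : Set (ℝ × ℝ)} (hU : IsOpen U) {m : ℕ}
    (hg : ContDiffOn ℝ (m + 1) g U) {p : ℝ × ℝ} (hp : p ∈ U) : DifferentiableAt ℝ g p :=
  (hg.differentiableOn (by simp) p hp).differentiableAt
    (hU.mem_nhds hp)

lemma contDiffOn_pdx {g : ℝ × ℝ → ℝ} {U : Set (ℝ × ℝ)} (hU : IsOpen U) {m : ℕ}
    (hg : ContDiffOn ℝ (m + 1) g U) : ContDiffOn ℝ m (pdx g) U := by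
  have hfd : ContDiffOn ℝ m (fderiv ℝ g) U := hg.fderiv_of_isOpen hU (by exact_mod_cast le_refl _)
  exact (hfd.clm_apply contDiffOn_const).congr fun p hp =>
    pdx_eq_fderiv (diffAt_of_contDiffOn hU hg hp)

lemma contDiffOn_pdy {g : ℝ × ℝ → ℝ} {U : Set (ℝ × ℝ)} (hU : IsOpen U) {m : ℕ}
    (hg : ContDiffOn ℝ (m + 1) g U) : ContDiffOn ℝ m (pdy g) U := by
  have hfd : ContDiffOn ℝ m (fderiv ℝ g) U := hg.fderiv_of_isOpen hU (by exact_mod_cast le_refl _)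
  exact (hfd.clm_apply contDiffOn_const).congr fun p hp =>
    pdy_eq_fderiv (diffAt_of_contDiffOn hU hg hp)

lemma contDiffOn_pdx_iter {g : ℝ × ℝ → ℝ} {U : Set (ℝ × ℝ)} (hU : IsOpen U) {m : ℕ} (i : ℕ)
    (hg : ContDiffOn ℝ (m + i) g U) : ContDiffOn ℝ m (pdx^[i] g) U := by
  induction i generalizing g with
  | zero => simpa using hg
  | succ i ih =>
    rw [Function.iterate_succ_apply]
    have e : ((m : WithTop ℕ∞) + (i + 1 : ℕ)) = ((m + i : ℕ) : WithTop ℕ∞) + 1 := by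
      push_cast; ring
    rw [e] at hg
    exact ih (contDiffOn_pdx hU hg)

lemma contDiffOn_pdy_iter {g : ℝ × ℝ → ℝ} {U : Set (ℝ × ℝ)} (hU : IsOpen U) {m : ℕ} (j : ℕ)
    (hg : ContDiffOn ℝ (m + j) g U) : ContDiffOn ℝ m (pdy^[j] g) U := by
  induction j generalizing g with
  | zero => simpa using hg
  | succ j ih =>
    rw [Function.iterate_succ_apply]
    have e : ((m : WithTop ℕ∞) + (j + 1 : ℕ)) = ((m + j : ℕ) : WithTop ℕ∞) + 1 := by
      push_cast; ring
    rw [e] at hg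
    exact ih (contDiffOn_pdy hU hg)

lemma contDiffOn_partialDeriv2 {f : ℝ × ℝ → ℝ} {U : Set (ℝ × ℝ)} (hU : IsOpen U) {n : ℕ}
    (hf : ContDiffOn ℝ n f U) {i j m : ℕ} (h : m + i + j ≤ n) :
    ContDiffOn ℝ m (partialDeriv2 f i j) U := by
  have h1 : ContDiffOn ℝ (m + i + j) f U := hf.of_le (by exact_mod_cast h)
  exact contDiffOn_pdx_iter hU i (contDiffOn_pdy_iter hU j (by exact_mod_cast h1))

lemma clairaut {g : ℝ × ℝ → ℝ} {U : Set (ℝ × ℝ)} (hU : IsOpen U)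
    (hg : ContDiffOn ℝ 2 g U) {p : ℝ × ℝ} (hp : p ∈ U) :
    pdx (pdy g) p = pdy (pdx g) p := by
  have hg2 : ContDiffOn ℝ ((1 : ℕ) + 1) g U := by exact_mod_cast hg
  have hdg : ∀ q ∈ U, DifferentiableAt ℝ g q := fun q hq => diffAt_of_contDiffOn hU hg2 hq
  have hfd : ContDiffOn ℝ (1 : ℕ) (fderiv ℝ g) U := by
    have := hg.fderiv_of_isOpen hU (m := 1) (by norm_num)
    exact_mod_cast this
  have hfd' : DifferentiableAt ℝ (fderiv ℝ g) p :=
    (hfd.differentiableOn (by simp) p hp).differentiableAt (hU.mem_nhds hp)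
  have hsymm : ∀ v w : ℝ × ℝ, fderiv ℝ (fderiv ℝ g) p v w = fderiv ℝ (fderiv ℝ g) p w v := by
    intro v w
    refine second_derivative_symmetric_of_eventually (f := g) ?_ hfd'.hasFDerivAt v w
    filter_upwards [hU.mem_nhds hp] with q hq using (hdg q hq).hasFDerivAt
  have hy : (fun q => pdy g q) =ᶠ[nhds p] fun q => fderiv ℝ g q (0, 1) := by
    filter_upwards [hU.mem_nhds hp] with q hq using pdy_eq_fderiv (hdg q hq)
  have hx : (fun q => pdx g q) =ᶠ[nhds p] fun q => fderiv ℝ g q (1, 0) := by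
    filter_upwards [hU.mem_nhds hp] with q hq using pdx_eq_fderiv (hdg q hq)
  have hdy : DifferentiableAt ℝ (pdy g) p :=
    ((contDiffOn_pdy hU hg2).differentiableOn (by norm_num) p hp).differentiableAt
      (hU.mem_nhds hp)
  have hdx : DifferentiableAt ℝ (pdx g) p :=
    ((contDiffOn_pdx hU hg2).differentiableOn (by norm_num) p hp).differentiableAt
      (hU.mem_nhds hp)
  have e1 : pdx (pdy g) p = fderiv ℝ (fderiv ℝ g) p (1, 0) (0, 1) := by
    rw [pdx_eq_fderiv hdy, hy.fderiv_eq]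
    rw [fderiv_clm_apply hfd' (differentiableAt_const _)]
    simp
  have e2 : pdy (pdx g) p = fderiv ℝ (fderiv ℝ g) p (0, 1) (1, 0) := by
    rw [pdy_eq_fderiv hdx, hx.fderiv_eq]
    rw [fderiv_clm_apply hfd' (differentiableAt_const _)]
    simp
  rw [e1, e2, hsymm]

lemma pdx_congr {h₁ h₂ : ℝ × ℝ → ℝ} {U : Set (ℝ × ℝ)} (hU : IsOpen U)
    (h : EqOn h₁ h₂ U) : EqOn (pdx h₁) (pdx h₂) U := by
  intro p hp
  have hcont : ContinuousAt (fun x : ℝ => (x, p.2)) p.1 := by fun_prop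
  have hev : (fun x => h₁ (x, p.2)) =ᶠ[nhds p.1] fun x => h₂ (x, p.2) := by
    filter_upwards [hcont.preimage_mem_nhds (hU.mem_nhds (by simpa using hp))] with x hx using
      h hx
  exact hev.deriv_eq

lemma pdx_iter_congr {h₁ h₂ : ℝ × ℝ → ℝ} {U : Set (ℝ × ℝ)} (hU : IsOpen U) (i : ℕ)
    (h : EqOn h₁ h₂ U) : EqOn (pdx^[i] h₁) (pdx^[i] h₂) U := by
  induction i generalizing h₁ h₂ with
  | zero => simpa using h
  | succ i ih => simpa [Function.iterate_succ_apply] using ih (pdx_congr hU h)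

/-- `pdy` commutes past `pdx^[i]` for `C^{i+1}` functions. -/
lemma pdy_pdx_iter {g : ℝ × ℝ → ℝ} {U : Set (ℝ × ℝ)} (hU : IsOpen U) (i : ℕ)
    (hg : ContDiffOn ℝ (i + 1) g U) :
    EqOn (pdy (pdx^[i] g)) (pdx^[i] (pdy g)) U := by
  induction i generalizing g with
  | zero => exact fun q hq => rfl
  | succ i ih =>
    intro p hp
    have hg' : ContDiffOn ℝ (i + 1) (pdx g) U := by
      have : ContDiffOn ℝ (((i + 1 : ℕ) : WithTop ℕ∞) + 1) g U := by exact_mod_cast hg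
      exact_mod_cast contDiffOn_pdx hU this
    have e1 : pdy (pdx^[i+1] g) p = pdx^[i] (pdy (pdx g)) p := by
      rw [Function.iterate_succ_apply]
      exact ih hg' hp
    have hg2 : ContDiffOn ℝ 2 g U := by
      apply hg.of_le
      exact_mod_cast (by exact_mod_cast Nat.le_add_left 2 i :
        (2 : WithTop ℕ∞) ≤ ((i + 2 : ℕ) : WithTop ℕ∞))
    have e2 : EqOn (pdy (pdx g)) (pdx (pdy g)) U := fun q hq => (clairaut hU hg2 hq).symm
    rw [e1, pdx_iter_congr hU i e2 hp, ← Function.iterate_succ_apply]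

lemma pdx_partialDeriv2 (f : ℝ × ℝ → ℝ) (i j : ℕ) :
    pdx (partialDeriv2 f i j) = partialDeriv2 f (i + 1) j := by
  simp only [partialDeriv2, ← Function.iterate_succ_apply' pdx]

lemma pdy_partialDeriv2 {f : ℝ × ℝ → ℝ} {U : Set (ℝ × ℝ)} (hU : IsOpen U) {n : ℕ}
    (hf : ContDiffOn ℝ n f U) {i j : ℕ} (h : i + j + 1 ≤ n) {p : ℝ × ℝ} (hp : p ∈ U) :
    pdy (partialDeriv2 f i j) p = partialDeriv2 f i (j + 1) p := by
  have hg : ContDiffOn ℝ (i + 1) (pdy^[j] f) U := by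
    have := contDiffOn_pdy_iter hU (m := i + 1) j
      (hf.of_le (by exact_mod_cast (by omega : i + 1 + j ≤ n)))
    exact_mod_cast this
  have := pdy_pdx_iter hU i hg hp
  simp only [partialDeriv2] at this ⊢
  rw [this, ← Function.iterate_succ_apply' pdy]

end Helpers

lemma pascal_sum (k : ℕ) (Q : ℕ → ℝ) :
    ∑ j ∈ Finset.range (k + 1), ((k.choose j : ℝ) * Q j + (k.choose j : ℝ) * Q (j + 1))
      = ∑ j ∈ Finset.range (k + 2), (((k + 1).choose j : ℝ)) * Q j := by
  rw [Finset.sum_add_distrib]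
  rw [Finset.sum_range_succ' (fun j => (((k + 1).choose j : ℝ)) * Q j) (k + 1)]
  have h2 : ∀ j, (((k + 1).choose (j + 1) : ℝ)) = (k.choose j : ℝ) + (k.choose (j + 1) : ℝ) := by
    intro j; rw [Nat.choose_succ_succ]; push_cast; ring
  simp_rw [h2, add_mul, Finset.sum_add_distrib]
  have h1 : (∑ j ∈ Finset.range (k + 1), (k.choose (j + 1) : ℝ) * Q (j + 1))
      + ((k + 1).choose 0 : ℝ) * Q 0 = ∑ j ∈ Finset.range (k + 1), (k.choose j : ℝ) * Q j := by
    have := Finset.sum_range_succ' (fun j => (k.choose j : ℝ) * Q j) (k + 1)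
    rw [Finset.sum_range_succ] at this
    simp only [Nat.choose_succ_self, Nat.cast_zero, zero_mul, add_zero] at this
    simpa using this.symm
  rw [add_assoc, h1, add_comm]

lemma hasDerivAt_dirDeriv {f : ℝ × ℝ → ℝ} {U : Set (ℝ × ℝ)} (hU : IsOpen U) {n : ℕ}
    (hf : ContDiffOn ℝ n f U) (mx my v1 v2 : ℝ) {k : ℕ} (hk : k + 1 ≤ n) {t : ℝ}
    (ht : (mx + t * v1, my + t * v2) ∈ U) :
    HasDerivAt (fun t : ℝ => ∑ j ∈ Finset.range (k + 1), (k.choose j : ℝ) * v1 ^ (k - j) *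
        v2 ^ j * partialDeriv2 f (k - j) j (mx + t * v1, my + t * v2))
      (∑ j ∈ Finset.range (k + 2), ((k + 1).choose j : ℝ) * v1 ^ (k + 1 - j) *
        v2 ^ j * partialDeriv2 f (k + 1 - j) j (mx + t * v1, my + t * v2)) t := by
  set c : ℝ × ℝ := (mx + t * v1, my + t * v2) with hc
  set Q : ℕ → ℝ := fun j => v1 ^ (k + 1 - j) * v2 ^ j * partialDeriv2 f (k + 1 - j) j c with hQ
  have key : ∀ j ∈ Finset.range (k + 1),
      HasDerivAt (fun t : ℝ => (k.choose j : ℝ) * v1 ^ (k - j) * v2 ^ j *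
          partialDeriv2 f (k - j) j (mx + t * v1, my + t * v2))
        ((k.choose j : ℝ) * Q j + (k.choose j : ℝ) * Q (j + 1)) t := by
    intro j hj
    rw [Finset.mem_range] at hj
    have hjk : j ≤ k := Nat.lt_succ_iff.mp hj
    have hdiff : DifferentiableAt ℝ (partialDeriv2 f (k - j) j) c := by
      have hc1 : ContDiffOn ℝ (1 : ℕ) (partialDeriv2 f (k - j) j) U :=
        contDiffOn_partialDeriv2 hU hf (by omega)
      exact ((hc1.differentiableOn (by simp)) c ht).differentiableAt
        (hU.mem_nhds ht)
    have H := (hasDerivAt_line (mx := mx) (my := my) (v1 := v1) (v2 := v2) (t := t) hdiff).const_mul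
      ((k.choose j : ℝ) * v1 ^ (k - j) * v2 ^ j)
    have epx : pdx (partialDeriv2 f (k - j) j) c = partialDeriv2 f (k + 1 - j) j c := by
      rw [pdx_partialDeriv2]
      congr 1
      omega
    have epy : pdy (partialDeriv2 f (k - j) j) c = partialDeriv2 f (k - j) (j + 1) c :=
      pdy_partialDeriv2 hU hf (by omega) ht
    refine H.congr_deriv ?_
    rw [epx, epy, hQ]
    have e1 : k + 1 - j = (k - j) + 1 := by omega
    have e2 : k + 1 - (j + 1) = k - j := by omega
    simp only [e1, e2]
    ring
  have Hsum := HasDerivAt.fun_sum key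
  refine Hsum.congr_deriv ?_
  rw [pascal_sum k Q]
  exact Finset.sum_congr rfl fun j _ => by simp only [hQ]; ring

/-- The `k`-th directional derivative sum along the segment `t ↦ m + t v`. -/
noncomputable def dirD (f : ℝ × ℝ → ℝ) (mx my v1 v2 : ℝ) (k : ℕ) (t : ℝ) : ℝ :=
  ∑ j ∈ Finset.range (k + 1), (k.choose j : ℝ) * v1 ^ (k - j) * v2 ^ j *
    partialDeriv2 f (k - j) j (mx + t * v1, my + t * v2)

lemma hasDerivAt_dirD {f : ℝ × ℝ → ℝ} {U : Set (ℝ × ℝ)} (hU : IsOpen U) {n : ℕ}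
    (hf : ContDiffOn ℝ n f U) (mx my v1 v2 : ℝ) {k : ℕ} (hk : k + 1 ≤ n) {t : ℝ}
    (ht : (mx + t * v1, my + t * v2) ∈ U) :
    HasDerivAt (dirD f mx my v1 v2 k) (dirD f mx my v1 v2 (k + 1) t) t := by
  unfold dirD
  exact hasDerivAt_dirDeriv hU hf mx my v1 v2 hk ht

lemma abs_dirD_le {f : ℝ × ℝ → ℝ} {mx my v1 v2 r : ℝ} (hv1 : |v1| ≤ r) (hv2 : |v2| ≤ r)
    (k : ℕ) (t : ℝ) :
    |dirD f mx my v1 v2 k t| ≤ r ^ k * ∑ j ∈ Finset.range (k + 1), (k.choose j : ℝ) *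
      |partialDeriv2 f (k - j) j (mx + t * v1, my + t * v2)| := by
  have hr : 0 ≤ r := (abs_nonneg v1).trans hv1
  rw [Finset.mul_sum]
  refine (Finset.abs_sum_le_sum_abs _ _).trans (Finset.sum_le_sum fun j hj => ?_)
  rw [Finset.mem_range] at hj
  have hjk : j ≤ k := by omega
  rw [abs_mul, abs_mul, abs_mul, Nat.abs_cast, abs_pow, abs_pow]
  have h1 : |v1| ^ (k - j) ≤ r ^ (k - j) := pow_le_pow_left₀ (abs_nonneg _) hv1 _
  have h2 : |v2| ^ j ≤ r ^ j := pow_le_pow_left₀ (abs_nonneg _) hv2 _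
  have hpow : r ^ (k - j) * r ^ j = r ^ k := by rw [← pow_add]; congr 1; omega
  calc (k.choose j : ℝ) * |v1| ^ (k - j) * |v2| ^ j * |partialDeriv2 f (k - j) j _|
      ≤ (k.choose j : ℝ) * r ^ (k - j) * r ^ j * |partialDeriv2 f (k - j) j _| := by
        gcongr
    _ = r ^ k * ((k.choose j : ℝ) * |partialDeriv2 f (k - j) j _|) := by
        rw [← hpow]; ring
set_option maxHeartbeats 1000000 in
theorem taylor_form_is_enclosure
    (f : ℝ × ℝ → ℝ) (n m₀ : ℕ) (hm₀ : 1 ≤ m₀) (hm₀n : m₀ ≤ n)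
    (mx my r : ℝ) (hr : 0 ≤ r)
    (U : Set (ℝ × ℝ)) (hU : IsOpen U)
    (hBU : Icc (mx - r, my - r) (mx + r, my + r) ⊆ U)
    (hf : ContDiffOn ℝ n f U)
    (T : ℝ × ℝ → ℝ)
    (hT : ∀ q : ℝ × ℝ, T q =
      ∑ k ∈ Finset.range m₀, (1 / (k.factorial : ℝ)) *
        ∑ j ∈ Finset.range (k + 1), (k.choose j : ℝ) *
          (q.1 - mx) ^ (k - j) * (q.2 - my) ^ j * partialDeriv2 f (k - j) j (mx, my))
    (M : ℕ → ℝ)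
    (hM : ∀ j ≤ n, ∀ q ∈ Icc (mx - r, my - r) (mx + r, my + r),
      |partialDeriv2 f (n - j) j q| ≤ M j)
    (s : ℕ → ℝ)
    (hs : ∀ k < n, s k = (1 / (k.factorial : ℝ)) *
      ∑ j ∈ Finset.range (k + 1), (k.choose j : ℝ) *
        |partialDeriv2 f (k - j) j (mx, my)|)
    (hsn : s n = (1 / (n.factorial : ℝ)) *
      ∑ j ∈ Finset.range (n + 1), (n.choose j : ℝ) * M j)
    (S : ℝ) (hS : S = ∑ k ∈ Finset.Icc m₀ n, s k * r ^ (k - m₀)) :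
    f '' Icc (mx - r, my - r) (mx + r, my + r) ⊆
      T '' Icc (mx - r, my - r) (mx + r, my + r) +
        Icc (-(r ^ m₀ * S)) (r ^ m₀ * S) := by
  rintro y ⟨q, hq, rfl⟩
  set v1 : ℝ := q.1 - mx with hv1def
  set v2 : ℝ := q.2 - my with hv2def
  have hqle := hq
  rw [Set.mem_Icc, Prod.le_def, Prod.le_def] at hqle
  obtain ⟨⟨h11, h12⟩, h21, h22⟩ := hqle
  simp only at h11 h12 h21 h22
  have hv1 : |v1| ≤ r := abs_le.mpr ⟨by rw [hv1def]; linarith, by rw [hv1def]; linarith⟩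
  have hv2 : |v2| ≤ r := abs_le.mpr ⟨by rw [hv2def]; linarith, by rw [hv2def]; linarith⟩
  have hcB : ∀ t ∈ Icc (0:ℝ) 1, (mx + t * v1, my + t * v2) ∈
      Icc ((mx - r : ℝ), (my - r : ℝ)) ((mx + r : ℝ), (my + r : ℝ)) := by
    intro t ht
    obtain ⟨ht0, ht1⟩ := ht
    have habs1 : |t * v1| ≤ r := by
      rw [abs_mul]
      calc |t| * |v1| ≤ 1 * r :=
            mul_le_mul (by rwa [abs_of_nonneg ht0]) hv1 (abs_nonneg _) zero_le_one
        _ = r := one_mul r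
    have habs2 : |t * v2| ≤ r := by
      rw [abs_mul]
      calc |t| * |v2| ≤ 1 * r :=
            mul_le_mul (by rwa [abs_of_nonneg ht0]) hv2 (abs_nonneg _) zero_le_one
        _ = r := one_mul r
    rw [abs_le] at habs1 habs2
    rw [Set.mem_Icc, Prod.le_def, Prod.le_def]
    exact ⟨⟨by simp; linarith [habs1.1], by simp; linarith [habs2.1]⟩,
      by simp; linarith [habs1.2], by simp; linarith [habs2.2]⟩
  have hcU : ∀ t ∈ Icc (0:ℝ) 1, (mx + t * v1, my + t * v2) ∈ U :=
    fun t ht => hBU (hcB t ht)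
  have hmB : ((mx : ℝ), (my : ℝ)) ∈
      Icc ((mx - r : ℝ), (my - r : ℝ)) ((mx + r : ℝ), (my + r : ℝ)) := by
    rw [Set.mem_Icc, Prod.le_def, Prod.le_def]
    exact ⟨⟨by simp; linarith, by simp; linarith⟩, by simp; linarith, by simp; linarith⟩
  -- abbreviation
  have hd0 : ∀ k, dirD f mx my v1 v2 k 0 = ∑ j ∈ Finset.range (k + 1), (k.choose j : ℝ) *
      v1 ^ (k - j) * v2 ^ j * partialDeriv2 f (k - j) j (mx, my) := by
    intro k; unfold dirD; norm_num
  -- smoothness of g on [0,1]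
  have hgC : ContDiffOn ℝ n (fun t : ℝ => f (mx + t * v1, my + t * v2)) (Icc (0:ℝ) 1) := by
    have hcCD : ContDiff ℝ n (fun t : ℝ => ((mx + t * v1 : ℝ), (my + t * v2 : ℝ))) :=
      (contDiff_const.add (contDiff_id.mul contDiff_const)).prodMk
        (contDiff_const.add (contDiff_id.mul contDiff_const))
    exact hf.comp hcCD.contDiffOn (fun t ht => hcU t ht)
  have huD : UniqueDiffOn ℝ (Icc (0:ℝ) 1) := uniqueDiffOn_Icc zero_lt_one
  -- identification of iterated derivatives
  have hiter : ∀ k, k ≤ n → ∀ t ∈ Icc (0:ℝ) 1,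
      iteratedDerivWithin k (fun t : ℝ => f (mx + t * v1, my + t * v2)) (Icc (0:ℝ) 1) t
        = dirD f mx my v1 v2 k t := by
    intro k
    induction k with
    | zero =>
      intro _ t ht
      rw [iteratedDerivWithin_zero]
      unfold dirD
      simp [partialDeriv2]
    | succ k ih =>
      intro hk t ht
      have hk' : k ≤ n := by omega
      rw [iteratedDerivWithin_succ]
      rw [derivWithin_congr (fun u hu => ih hk' u hu) (ih hk' t ht)]
      exact ((hasDerivAt_dirD hU hf mx my v1 v2 hk (hcU t ht)).hasDerivWithinAt).derivWithin
        (huD t ht)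
  -- Taylor's theorem with Lagrange remainder
  obtain ⟨N, rfl⟩ : ∃ N, n = N + 1 := ⟨n - 1, by omega⟩
  have hfT : ContDiffOn ℝ N (fun t : ℝ => f (mx + t * v1, my + t * v2)) (Icc (0:ℝ) 1) :=
    hgC.of_le (by exact_mod_cast Nat.le_succ N)
  have hf' : DifferentiableOn ℝ
      (iteratedDerivWithin N (fun t : ℝ => f (mx + t * v1, my + t * v2)) (Icc (0:ℝ) 1))
      (Ioo (0:ℝ) 1) := by
    intro t ht
    have htI : t ∈ Icc (0:ℝ) 1 := Ioo_subset_Icc_self ht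
    have hd : HasDerivAt (dirD f mx my v1 v2 N) (dirD f mx my v1 v2 (N + 1) t) t :=
      hasDerivAt_dirD hU hf mx my v1 v2 le_rfl (hcU t htI)
    exact (hd.differentiableAt.differentiableWithinAt).congr
      (fun u hu => hiter N (Nat.le_succ N) u (Ioo_subset_Icc_self hu))
      (hiter N (Nat.le_succ N) t htI)
  have hTL := taylor_mean_remainder_lagrange (x₀ := 0) (x := 1) zero_ne_one
    (by rwa [uIcc_of_le zero_le_one]) (by rwa [uIcc_of_le zero_le_one, uIoo_of_le zero_le_one])
  rw [uIcc_of_le zero_le_one, uIoo_of_le zero_le_one] at hTL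
  obtain ⟨ξ, hξ, hR⟩ := hTL
  have hξI : ξ ∈ Icc (0:ℝ) 1 := Ioo_subset_Icc_self hξ
  have htaylor : taylorWithinEval (fun t : ℝ => f (mx + t * v1, my + t * v2)) N (Icc (0:ℝ) 1) 0 1
      = ∑ k ∈ Finset.range (N + 1), ((k.factorial : ℝ))⁻¹ * dirD f mx my v1 v2 k 0 := by
    rw [taylor_within_apply]
    refine Finset.sum_congr rfl fun k hk => ?_
    rw [Finset.mem_range] at hk
    rw [hiter k (by omega) 0 (by norm_num)]
    simp
  rw [htaylor, hiter (N + 1) le_rfl ξ hξI] at hR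
  simp only [sub_zero, one_pow, mul_one] at hR
  -- g 1 = f q
  have hg1 : ((mx + 1 * v1 : ℝ), (my + 1 * v2 : ℝ)) = q := by
    simp only [one_mul, hv1def, hv2def, Prod.ext_iff]
    constructor <;> ring
  -- T q in terms of dirD
  have hTq : T q = ∑ k ∈ Finset.range m₀, ((k.factorial : ℝ))⁻¹ * dirD f mx my v1 v2 k 0 := by
    rw [hT q]
    refine Finset.sum_congr rfl fun k _ => ?_
    rw [one_div, hd0 k]
  -- the error decomposition
  have hEeq : f q - T q = (∑ k ∈ Finset.Ico m₀ (N + 1),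
        ((k.factorial : ℝ))⁻¹ * dirD f mx my v1 v2 k 0)
      + dirD f mx my v1 v2 (N + 1) ξ / ((N + 1).factorial : ℝ) := by
    have hsplit : ∑ k ∈ Finset.Ico m₀ (N + 1),
        ((k.factorial : ℝ))⁻¹ * dirD f mx my v1 v2 k 0
        = (∑ k ∈ Finset.range (N + 1), ((k.factorial : ℝ))⁻¹ * dirD f mx my v1 v2 k 0)
          - ∑ k ∈ Finset.range m₀, ((k.factorial : ℝ))⁻¹ * dirD f mx my v1 v2 k 0 :=
      Finset.sum_Ico_eq_sub _ hm₀n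
    rw [hTq, hsplit]
    rw [hg1] at hR
    linarith
  -- bound on the interior Taylor coefficients
  have hb1 : ∀ k ∈ Finset.Ico m₀ (N + 1),
      |((k.factorial : ℝ))⁻¹ * dirD f mx my v1 v2 k 0| ≤ s k * r ^ k := by
    intro k hk
    rw [Finset.mem_Ico] at hk
    have hbound := abs_dirD_le (f := f) (mx := mx) (my := my) hv1 hv2 k 0
    simp only [zero_mul, add_zero] at hbound
    calc |((k.factorial : ℝ))⁻¹ * dirD f mx my v1 v2 k 0|
        = ((k.factorial : ℝ))⁻¹ * |dirD f mx my v1 v2 k 0| := by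
          rw [abs_mul, abs_of_nonneg (by positivity)]
      _ ≤ ((k.factorial : ℝ))⁻¹ * (r ^ k * ∑ j ∈ Finset.range (k + 1), (k.choose j : ℝ) *
            |partialDeriv2 f (k - j) j (mx, my)|) := by
          apply mul_le_mul_of_nonneg_left _ (by positivity)
          exact hbound
      _ = s k * r ^ k := by
          rw [hs k hk.2]
          field_simp
  -- bound on the remainder
  have hb2 : |dirD f mx my v1 v2 (N + 1) ξ / ((N + 1).factorial : ℝ)|
      ≤ s (N + 1) * r ^ (N + 1) := by
    have hbound := abs_dirD_le (f := f) (mx := mx) (my := my) hv1 hv2 (N + 1) ξ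
    have hbound2 : |dirD f mx my v1 v2 (N + 1) ξ|
        ≤ r ^ (N + 1) * ∑ j ∈ Finset.range (N + 2), ((N + 1).choose j : ℝ) * M j := by
      refine hbound.trans ?_
      apply mul_le_mul_of_nonneg_left _ (by positivity)
      refine Finset.sum_le_sum fun j hj => ?_
      rw [Finset.mem_range] at hj
      apply mul_le_mul_of_nonneg_left _ (by positivity)
      exact hM j (by omega) _ (hcB ξ hξI)
    calc |dirD f mx my v1 v2 (N + 1) ξ / ((N + 1).factorial : ℝ)|
        = |dirD f mx my v1 v2 (N + 1) ξ| * (((N + 1).factorial : ℝ))⁻¹ := by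
          rw [abs_div, Nat.abs_cast, div_eq_mul_inv]
      _ ≤ (r ^ (N + 1) * ∑ j ∈ Finset.range (N + 2), ((N + 1).choose j : ℝ) * M j) *
            (((N + 1).factorial : ℝ))⁻¹ := by
          apply mul_le_mul_of_nonneg_right hbound2 (by positivity)
      _ = s (N + 1) * r ^ (N + 1) := by
          rw [hsn]
          field_simp
  -- total error bound
  have hEbound : |f q - T q| ≤ r ^ m₀ * S := by
    rw [hEeq]
    calc |(∑ k ∈ Finset.Ico m₀ (N + 1), ((k.factorial : ℝ))⁻¹ * dirD f mx my v1 v2 k 0)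
          + dirD f mx my v1 v2 (N + 1) ξ / ((N + 1).factorial : ℝ)|
        ≤ |∑ k ∈ Finset.Ico m₀ (N + 1), ((k.factorial : ℝ))⁻¹ * dirD f mx my v1 v2 k 0|
          + |dirD f mx my v1 v2 (N + 1) ξ / ((N + 1).factorial : ℝ)| := abs_add_le _ _
      _ ≤ (∑ k ∈ Finset.Ico m₀ (N + 1), s k * r ^ k) + s (N + 1) * r ^ (N + 1) := by
          apply add_le_add _ hb2
          exact (Finset.abs_sum_le_sum_abs _ _).trans (Finset.sum_le_sum hb1)
      _ = ∑ k ∈ Finset.Icc m₀ (N + 1), s k * r ^ k := by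
          rw [← Finset.Ico_add_one_right_eq_Icc, Finset.sum_Ico_succ_top hm₀n]
      _ = r ^ m₀ * S := by
          rw [hS, Finset.mul_sum]
          refine Finset.sum_congr rfl fun k hk => ?_
          rw [Finset.mem_Icc] at hk
          have : r ^ m₀ * r ^ (k - m₀) = r ^ k := by rw [← pow_add]; congr 1; omega
          rw [← this]; ring
  -- conclude
  have hfq : f q = T q + (f q - T q) := by ring
  rw [hfq]
  exact Set.add_mem_add ⟨q, hq, rfl⟩
    (Set.mem_Icc.mpr ⟨(abs_le.mp hEbound).1, (abs_le.mp hEbound).2⟩)
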